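/- Let A be a commutative ring with 2 invertible, B a commutative A-algebra, and C_n := B^{⊗(n+1)}/(∑_{i<j} I_{ij}²) with J̃_{ij} the images of the merge-kernels. Define Φ_n : Ω^{(n)}_{B/A} → C_n by Φ_n(ω₁ ∧̃ ⋯ ∧̃ ωₙ) = φ₁(ω₁)⋯φₙ(ωₙ), where φ_j(dy) is the class of d^{0,j}y. Then Φ_n is well-defined (multilinear and antisymmetric), and the composition Ψ_n ∘ Φ_n is the identity on Ω^{(n)}_{B/A}, where Ψ_n is induced by y₀⊗⋯⊗yₙ ↦ y₀ dy₁ ∧̃ ⋯ ∧̃ dyₙ. -/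

import Mathlib

open scoped TensorProduct
open PiTensorProduct

variable (A B : Type) [CommRing A] [CommRing B] [Algebra A B]

abbrev Bpow (n : ℕ) : Type := ⨂[A] (_ : Fin n), B

noncomputable def rmap {m n : ℕ} (r : Fin m → Fin n) : Bpow A B m →ₐ[A] Bpow A B n :=
  PiTensorProduct.liftAlgHom
    ((MultilinearMap.mkPiAlgebra A (Fin m) (Bpow A B n)).compLinearMap
      (fun k => (PiTensorProduct.singleAlgHom (R := A) (A := fun _ : Fin n => B) (r k)).toLinearMap))
    (by simp [← PiTensorProduct.one_def])
    (by intro x y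
        simp only [MultilinearMap.compLinearMap_apply, MultilinearMap.mkPiAlgebra_apply,
          Pi.mul_apply, AlgHom.toLinearMap_apply, _root_.map_mul, Finset.prod_mul_distrib])

noncomputable abbrev sgl (n : ℕ) (i : Fin n) : B →ₐ[A] Bpow A B n :=
  PiTensorProduct.singleAlgHom (R := A) (A := fun _ : Fin n => B) i

lemma rmap_tprod {m n : ℕ} (r : Fin m → Fin n) (f : Fin m → B) :
    rmap A B r (tprod A f) = ∏ k, sgl A B n (r k) (f k) := by
  simp [rmap, PiTensorProduct.liftAlgHom, sgl]

lemma rmap_single {m n : ℕ} (r : Fin m → Fin n) (k : Fin m) (y : B) :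
    rmap A B r (sgl A B m k y) = sgl A B n (r k) y := by
  rw [show sgl A B m k y = tprod A (MonoidHom.mulSingle (fun _ : Fin m => B) k y) from rfl,
    rmap_tprod]
  rw [Finset.prod_eq_single k]
  · simp
  · intro k' _ hk'
    simp [MonoidHom.mulSingle_apply, Pi.mulSingle_eq_of_ne hk', ← PiTensorProduct.one_def]
  · simp

lemma prod_single (n : ℕ) (g : Fin n → B) :
    ∏ k, sgl A B n k (g k) = tprod A g := by
  have : ∀ k : Fin n, sgl A B n k (g k)
      = PiTensorProduct.tprodMonoidHom A (Pi.mulSingle k (g k)) := fun k => rfl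
  simp_rw [this, ← map_prod, Finset.univ_prod_mulSingle]
  rfl

noncomputable def mergeN (n i j : ℕ) (hij : i < j) (hj : j ≤ n) :
    Bpow A B (n+1) →ₐ[A] Bpow A B n :=
  rmap A B (fun k => if h1 : k.val < j then ⟨k.val, by omega⟩
    else if h2 : k.val = j then ⟨i, by omega⟩
    else ⟨k.val - 1, by have := k.isLt; omega⟩)

noncomputable def Iideal (n i j : ℕ) (hij : i < j) (hj : j ≤ n) : Ideal (Bpow A B (n+1)) :=
  RingHom.ker (mergeN A B n i j hij hj)

noncomputable def Kideal (n : ℕ) : Ideal (Bpow A B (n+1)) :=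
  ⨆ (i : ℕ) (j : ℕ) (hij : i < j) (hj : j ≤ n), (Iideal A B n i j hij hj) ^ 2

abbrev Cq (n : ℕ) : Type := Bpow A B (n+1) ⧸ Kideal A B n

noncomputable def Jt (n i j : ℕ) (hij : i < j) (hj : j ≤ n) : Ideal (Cq A B n) :=
  Ideal.map (Ideal.Quotient.mk (Kideal A B n)) (Iideal A B n i j hij hj)

noncomputable def dElt (n i j : ℕ) (hi : i ≤ n) (hj : j ≤ n) (y : B) : Bpow A B (n+1) :=
  PiTensorProduct.singleAlgHom (R := A) (A := fun _ : Fin (n+1) => B) ⟨j, by omega⟩ y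
    - PiTensorProduct.singleAlgHom (R := A) (A := fun _ : Fin (n+1) => B) ⟨i, by omega⟩ y

noncomputable def insN (n j : ℕ) (hj : j ≤ n+1) : Bpow A B (n+1) →ₐ[A] Bpow A B (n+2) :=
  rmap A B (fun k => if h : k.val < j then ⟨k.val, by omega⟩
    else ⟨k.val + 1, by have := k.isLt; omega⟩)

noncomputable def eN (n : ℕ) : Bpow A B (n+1) →ₗ[A] Bpow A B (n+2) :=
  ∑ j : Fin (n+2), ((-1 : ℤ) ^ (j : ℕ)) • (insN A B n j (by omega)).toLinearMap

noncomputable def smashG (m n N : ℕ) (h : N = m + n) (x : Bpow A B (m+1)) (y : Bpow A B (n+1)) :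
    Bpow A B (N+1) :=
  rmap A B (fun k : Fin (m+1) => (⟨k.val, by have := k.isLt; omega⟩ : Fin (N+1))) x *
  rmap A B (fun k : Fin (n+1) => (⟨m + k.val, by have := k.isLt; omega⟩ : Fin (N+1))) y

/-- The wedge `dy₁ ∧ ⋯ ∧ dyₙ`-style elements of the `n`-th exterior power. -/
noncomputable def wedgeD (n : ℕ) (f : Fin n → Ω[B⁄A]) : ⋀[B]^n (Ω[B⁄A]) :=
  ⟨ExteriorAlgebra.ιMulti B n f, ExteriorAlgebra.ιMulti_range B n (Set.mem_range_self f)⟩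

/-- `B`-algebra structure on `C_n` through the 0-th tensor factor. -/
noncomputable instance instAlgebraBCq (n : ℕ) : Algebra B (Cq A B n) :=
  ((Ideal.Quotient.mk (Kideal A B n)).comp
    (PiTensorProduct.singleAlgHom (R := A) (A := fun _ : Fin (n+1) => B) 0).toRingHom).toAlgebra

----------------------------------------------------------------------
-- New material
----------------------------------------------------------------------

lemma dElt_mem (n i j : ℕ) (hij : i < j) (hj : j ≤ n) (y : B) :
    dElt A B n i j (by omega) hj y ∈ Iideal A B n i j hij hj := by
  have h1 : mergeN A B n i j hij hj (sgl A B (n+1) ⟨j, by omega⟩ y)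
      = sgl A B n ⟨i, by omega⟩ y := by
    rw [mergeN, rmap_single]
    congr 1
    simp only [lt_irrefl, dif_neg, dif_pos]
    simp
  have h2 : mergeN A B n i j hij hj (sgl A B (n+1) ⟨i, by omega⟩ y)
      = sgl A B n ⟨i, by omega⟩ y := by
    rw [mergeN, rmap_single]
    congr 1
    simp [hij]
  show _ ∈ RingHom.ker _
  rw [RingHom.mem_ker]
  show (mergeN A B n i j hij hj) (sgl A B (n+1) ⟨j, by omega⟩ y - sgl A B (n+1) ⟨i, by omega⟩ y) = 0
  rw [map_sub, h1, h2, sub_self]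

lemma mul_mem_K (n i j : ℕ) (hij : i < j) (hj : j ≤ n) {x y : Bpow A B (n+1)}
    (hx : x ∈ Iideal A B n i j hij hj) (hy : y ∈ Iideal A B n i j hij hj) :
    x * y ∈ Kideal A B n := by
  have h1 : x * y ∈ (Iideal A B n i j hij hj) ^ 2 := by
    rw [sq]
    exact Ideal.mul_mem_mul hx hy
  have h2 : (Iideal A B n i j hij hj) ^ 2 ≤ Kideal A B n := by
    refine le_iSup_of_le i ?_
    refine le_iSup_of_le j ?_
    refine le_iSup_of_le hij ?_
    exact le_iSup_of_le hj le_rfl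
  exact h2 h1

lemma mk_mul_eq_zero (n i j : ℕ) (hij : i < j) (hj : j ≤ n) {x y : Bpow A B (n+1)}
    (hx : x ∈ Iideal A B n i j hij hj) (hy : y ∈ Iideal A B n i j hij hj) :
    Ideal.Quotient.mk (Kideal A B n) (x * y) = 0 := by
  rw [Ideal.Quotient.eq_zero_iff_mem]
  exact mul_mem_K A B n i j hij hj hx hy

lemma algebraMap_BCq (n : ℕ) (b : B) :
    algebraMap B (Cq A B n) b
      = Ideal.Quotient.mk (Kideal A B n) (sgl A B (n+1) 0 b) := rfl

noncomputable instance instTowerABCq (n : ℕ) : IsScalarTower A B (Cq A B n) :=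
  IsScalarTower.of_algebraMap_eq fun a => by
    rw [algebraMap_BCq]
    have h1 : sgl A B (n+1) 0 (algebraMap A B a) = algebraMap A (Bpow A B (n+1)) a :=
      AlgHom.commutes _ a
    rw [h1]
    rfl

/-- The derivation `y ↦ [d^{0,j} y]`. -/
noncomputable def delta (n j : ℕ) (h1 : 1 ≤ j) (hj : j ≤ n) : Derivation A B (Cq A B n) where
  toLinearMap :=
    (Ideal.Quotient.mkₐ A (Kideal A B n)).toLinearMap.comp
      ((sgl A B (n+1) ⟨j, by omega⟩).toLinearMap - (sgl A B (n+1) ⟨0, by omega⟩).toLinearMap)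
  map_one_eq_zero' := by
    simp
  leibniz' := fun a b => by
    have key : sgl A B (n+1) ⟨j, by omega⟩ (a*b) - sgl A B (n+1) ⟨0, by omega⟩ (a*b)
        = sgl A B (n+1) 0 a *
            (sgl A B (n+1) ⟨j, by omega⟩ b - sgl A B (n+1) ⟨0, by omega⟩ b)
          + sgl A B (n+1) 0 b *
            (sgl A B (n+1) ⟨j, by omega⟩ a - sgl A B (n+1) ⟨0, by omega⟩ a)
          + (sgl A B (n+1) ⟨j, by omega⟩ b - sgl A B (n+1) ⟨0, by omega⟩ b) *
            (sgl A B (n+1) ⟨j, by omega⟩ a - sgl A B (n+1) ⟨0, by omega⟩ a) := by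
      rw [_root_.map_mul, _root_.map_mul]
      have h0 : (⟨0, by omega⟩ : Fin (n+1)) = 0 := by ext; simp
      rw [h0]
      ring
    simp only [LinearMap.coe_comp, Function.comp_apply, LinearMap.sub_apply,
      AlgHom.toLinearMap_apply, AlgHom.toLinearMap_apply, Ideal.Quotient.mkₐ_eq_mk]
    rw [key]
    have hzero : Ideal.Quotient.mk (Kideal A B n)
        ((sgl A B (n+1) ⟨j, by omega⟩ b - sgl A B (n+1) ⟨0, by omega⟩ b) *
          (sgl A B (n+1) ⟨j, by omega⟩ a - sgl A B (n+1) ⟨0, by omega⟩ a)) = 0 := by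
      refine mk_mul_eq_zero A B n 0 j h1 hj ?_ ?_
      · exact dElt_mem A B n 0 j h1 hj b
      · exact dElt_mem A B n 0 j h1 hj a
    rw [map_add, map_add, hzero, add_zero, _root_.map_mul, _root_.map_mul,
      Algebra.smul_def, Algebra.smul_def, algebraMap_BCq, algebraMap_BCq]

lemma delta_apply (n j : ℕ) (h1 : 1 ≤ j) (hj : j ≤ n) (y : B) :
    delta A B n j h1 hj y
      = Ideal.Quotient.mk (Kideal A B n) (dElt A B n 0 j (by omega) hj y) := rfl

/-- `φ_j : Ω → C_n`. -/
noncomputable def phi (n : ℕ) (j : Fin n) : Ω[B⁄A] →ₗ[B] Cq A B n :=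
  (delta A B n (j.val + 1) (by omega) j.isLt).liftKaehlerDifferential

lemma phi_D (n : ℕ) (j : Fin n) (y : B) :
    phi A B n j (KaehlerDifferential.D A B y)
      = Ideal.Quotient.mk (Kideal A B n)
          (dElt A B n 0 (j.val+1) (Nat.zero_le n) j.isLt y) := by
  rw [phi, Derivation.liftKaehlerDifferential_comp_D]
  rfl

lemma half_cancel {M : Type} [AddCommGroup M] [Module A M] (h2 : IsUnit (2 : A)) {x : M}
    (h : x + x = 0) : x = 0 := by
  have h1 : ((h2.unit⁻¹ : Aˣ) : A) • ((2 : A) • x) = x := by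
    rw [smul_smul, IsUnit.val_inv_mul, one_smul]
  rw [two_smul, h, smul_zero] at h1
  exact h1.symm

/-- Antisymmetry on generators. -/
lemma anti_gen (n i j : ℕ) (h1 : 1 ≤ i) (hij : i < j) (hj : j ≤ n) (y z : B) :
    Ideal.Quotient.mk (Kideal A B n) (dElt A B n 0 i (by omega) (by omega) y) *
      Ideal.Quotient.mk (Kideal A B n) (dElt A B n 0 j (by omega) hj z) +
    Ideal.Quotient.mk (Kideal A B n) (dElt A B n 0 i (by omega) (by omega) z) *
      Ideal.Quotient.mk (Kideal A B n) (dElt A B n 0 j (by omega) hj y) = 0 := by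
  have key : dElt A B n 0 i (by omega) (by omega) y * dElt A B n 0 j (by omega) hj z
      + dElt A B n 0 i (by omega) (by omega) z * dElt A B n 0 j (by omega) hj y
      = dElt A B n 0 i (by omega) (by omega) y * dElt A B n 0 i (by omega) (by omega) z
      + dElt A B n 0 j (by omega) hj y * dElt A B n 0 j (by omega) hj z
      - dElt A B n i j (by omega) hj y * dElt A B n i j (by omega) hj z := by
    simp only [dElt]
    ring
  rw [← _root_.map_mul, ← _root_.map_mul, ← map_add, key, map_sub, map_add,
    mk_mul_eq_zero A B n 0 i h1 (by omega) (dElt_mem A B n 0 i h1 (by omega) y)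
      (dElt_mem A B n 0 i h1 (by omega) z),
    mk_mul_eq_zero A B n 0 j (by omega) hj (dElt_mem A B n 0 j (by omega) hj y)
      (dElt_mem A B n 0 j (by omega) hj z),
    mk_mul_eq_zero A B n i j hij hj (dElt_mem A B n i j hij hj y)
      (dElt_mem A B n i j hij hj z)]
  simp

/-- Antisymmetry for `φ`, general elements. -/
lemma anti (n : ℕ) (i j : Fin n) (hij : i ≠ j) (ω ζ : Ω[B⁄A]) :
    phi A B n i ω * phi A B n j ζ + phi A B n i ζ * phi A B n j ω = 0 := by
  -- reduce to i < j
  have main : ∀ (i j : Fin n), i.val < j.val → ∀ ω ζ : Ω[B⁄A],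
      phi A B n i ω * phi A B n j ζ + phi A B n i ζ * phi A B n j ω = 0 := by
    intro i j hlt
    have hgen : ∀ y z : B, phi A B n i (KaehlerDifferential.D A B y) *
          phi A B n j (KaehlerDifferential.D A B z) +
        phi A B n i (KaehlerDifferential.D A B z) *
          phi A B n j (KaehlerDifferential.D A B y) = 0 := by
      intro y z
      rw [phi_D, phi_D, phi_D, phi_D]
      exact anti_gen A B n (i.val+1) (j.val+1) (by omega) (by omega)
        (by have := j.isLt; omega) y z
    -- first: ω a generator, ζ arbitrary
    have step1 : ∀ y : B, ∀ ζ : Ω[B⁄A],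
        phi A B n i (KaehlerDifferential.D A B y) * phi A B n j ζ +
          phi A B n i ζ * phi A B n j (KaehlerDifferential.D A B y) = 0 := by
      intro y ζ
      have hζ : ζ ∈ Submodule.span B (Set.range (KaehlerDifferential.D A B)) := by
        rw [KaehlerDifferential.span_range_derivation]; trivial
      induction hζ using Submodule.span_induction with
      | mem x hx =>
        obtain ⟨z, rfl⟩ := hx
        exact hgen y z
      | zero => simp
      | add x₁ x₂ _ _ h1 h2 =>
        rw [map_add, map_add, mul_add, add_mul]
        linear_combination h1 + h2
      | smul b x _ hx =>
        rw [map_smul, map_smul, mul_smul_comm, smul_mul_assoc, Algebra.smul_def, Algebra.smul_def, ← mul_add, hx, mul_zero]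
    intro ω ζ
    have hω : ω ∈ Submodule.span B (Set.range (KaehlerDifferential.D A B)) := by
      rw [KaehlerDifferential.span_range_derivation]; trivial
    induction hω using Submodule.span_induction with
    | mem x hx =>
      obtain ⟨y, rfl⟩ := hx
      exact step1 y ζ
    | zero => simp
    | add x₁ x₂ _ _ h1 h2 =>
      rw [map_add, map_add, add_mul, mul_add]
      linear_combination h1 + h2
    | smul b x _ hx =>
      rw [map_smul, map_smul, smul_mul_assoc, mul_smul_comm, Algebra.smul_def, Algebra.smul_def, ← mul_add, hx, mul_zero]
  rcases lt_or_gt_of_ne (fun h => hij (by exact_mod_cast Fin.ext h)) with h | h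
  · exact main i j h ω ζ
  · have := main j i h ζ ω
    linear_combination this

/-- The multilinear map `(ω₁,…,ωₙ) ↦ ∏ φⱼ(ωⱼ)`. -/
noncomputable def Mmap (n : ℕ) : MultilinearMap B (fun _ : Fin n => Ω[B⁄A]) (Cq A B n) :=
  (MultilinearMap.mkPiAlgebra B (Fin n) (Cq A B n)).compLinearMap (fun j => phi A B n j)

lemma Mmap_apply (n : ℕ) (v : Fin n → Ω[B⁄A]) :
    Mmap A B n v = ∏ j, phi A B n j (v j) := rfl

/-- `Mmap` as an alternating map (using that 2 is invertible). -/
noncomputable def Malt (n : ℕ) (h2 : IsUnit (2 : A)) :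
    Ω[B⁄A] [⋀^Fin n]→ₗ[B] Cq A B n where
  toMultilinearMap := Mmap A B n
  map_eq_zero_of_eq' := by
    intro v i j hv hij
    have hz : phi A B n i (v i) * phi A B n j (v j) = 0 := by
      refine half_cancel A h2 ?_
      have := anti A B n i j hij (v i) (v j)
      rw [hv] at this ⊢
      linear_combination this
    show Mmap A B n v = 0
    rw [Mmap_apply]
    rw [← Finset.mul_prod_erase Finset.univ _ (Finset.mem_univ i),
      ← Finset.mul_prod_erase (Finset.univ.erase i) _
        (Finset.mem_erase.mpr ⟨Ne.symm hij, Finset.mem_univ j⟩)]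
    rw [← mul_assoc, hz, zero_mul]

/-- `Φₙ`. -/
noncomputable def Phi (n : ℕ) (h2 : IsUnit (2 : A)) : (⋀[B]^n (Ω[B⁄A])) →ₗ[B] Cq A B n :=
  (ExteriorAlgebra.liftAlternating
    (Function.update (fun i => (0 : Ω[B⁄A] [⋀^Fin i]→ₗ[B] Cq A B n)) n (Malt A B n h2))).comp
    (Submodule.subtype _)

lemma Phi_wedgeD (n : ℕ) (h2 : IsUnit (2 : A)) (v : Fin n → Ω[B⁄A]) :
    Phi A B n h2 (wedgeD A B n v) = ∏ j, phi A B n j (v j) := by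
  show ExteriorAlgebra.liftAlternating _ (ExteriorAlgebra.ιMulti B n v) = _
  rw [ExteriorAlgebra.liftAlternating_apply_ιMulti, Function.update_self]
  rfl

/-- `ιMulti` corestricted to the exterior power. -/
noncomputable def Wmap (n : ℕ) : Ω[B⁄A] [⋀^Fin n]→ₗ[B] (⋀[B]^n (Ω[B⁄A])) :=
  (ExteriorAlgebra.ιMulti B n).codRestrict (⋀[B]^n (Ω[B⁄A]))
    (fun v => ExteriorAlgebra.ιMulti_range B n (Set.mem_range_self v))

lemma Wmap_apply (n : ℕ) (v : Fin n → Ω[B⁄A]) : Wmap A B n v = wedgeD A B n v := rfl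

lemma wedge_span (n : ℕ) :
    Submodule.span B (Set.range (wedgeD A B n)) = ⊤ := by
  apply Submodule.map_injective_of_injective
    (Submodule.injective_subtype (⋀[B]^n (Ω[B⁄A])))
  rw [Submodule.map_span, Submodule.map_top, Submodule.range_subtype]
  rw [← Set.range_comp]
  have : (Submodule.subtype (⋀[B]^n (Ω[B⁄A]))) ∘ (wedgeD A B n)
      = ExteriorAlgebra.ιMulti B n := rfl
  rw [this, ExteriorAlgebra.ιMulti_span_fixedDegree]

/-- A multilinear map vanishing on tuples of `D`s vanishes. -/
lemma mzero {N : Type} [AddCommGroup N] [Module B N] (n : ℕ)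
    (g : MultilinearMap B (fun _ : Fin n => Ω[B⁄A]) N)
    (hg : ∀ y : Fin n → B, (g fun i => KaehlerDifferential.D A B (y i)) = 0)
    (v : Fin n → Ω[B⁄A]) : g v = 0 := by
  have H : ∀ m : ℕ, ∀ v : Fin n → Ω[B⁄A],
      (∀ k : Fin n, (m : ℕ) ≤ k.val → v k ∈ Set.range (KaehlerDifferential.D A B)) → g v = 0 := by
    intro m
    induction m with
    | zero =>
      intro v hv
      choose y hy using fun k => hv k (Nat.zero_le _)
      have : v = fun i => KaehlerDifferential.D A B (y i) := by
        funext i; exact (hy i).symm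
      rw [this]; exact hg y
    | succ m ih =>
      intro v hv
      by_cases hm : m < n
      · set k0 : Fin n := ⟨m, hm⟩
        have hL : ∀ x ∈ Submodule.span B (Set.range (KaehlerDifferential.D A B)),
            g.toLinearMap v k0 x = 0 := by
          intro x hx
          have hsub : Set.range (KaehlerDifferential.D A B)
              ⊆ ↑(LinearMap.ker (g.toLinearMap v k0)) := by
            rintro _ ⟨y, rfl⟩
            simp only [SetLike.mem_coe, LinearMap.mem_ker, MultilinearMap.toLinearMap_apply]
            refine ih _ fun k hk => ?_
            rcases eq_or_ne k k0 with rfl | hne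
            · rw [Function.update_self]; exact Set.mem_range_self y
            · rw [Function.update_of_ne hne]
              refine hv k ?_
              have : k.val ≠ m := fun h => hne (Fin.ext h)
              omega
          exact (Submodule.span_le.mpr hsub) hx
        have := hL (v k0) (by
          rw [KaehlerDifferential.span_range_derivation]; trivial)
        simpa [MultilinearMap.toLinearMap_apply, Function.update_eq_self] using this
      · refine ih v fun k hk => ?_
        exact absurd (lt_of_le_of_lt hk k.isLt) (by omega)
  refine H n v fun k hk => absurd (lt_of_le_of_lt hk k.isLt) (by omega)

lemma gen_span (n : ℕ) :
    Submodule.span B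
      {w : ⋀[B]^n (Ω[B⁄A]) | ∃ y : Fin n → B,
        w = wedgeD A B n (fun i => KaehlerDifferential.D A B (y i))} = ⊤ := by
  set T := Submodule.span B
      {w : ⋀[B]^n (Ω[B⁄A]) | ∃ y : Fin n → B,
        w = wedgeD A B n (fun i => KaehlerDifferential.D A B (y i))}
  have hvanish : ∀ v : Fin n → Ω[B⁄A], wedgeD A B n v ∈ T := by
    intro v
    have hz := mzero A B n
      ((T.mkQ.compAlternatingMap (Wmap A B n)).toMultilinearMap)
      (fun y => by
        show T.mkQ (Wmap A B n _) = 0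
        rw [Wmap_apply, Submodule.mkQ_apply, Submodule.Quotient.mk_eq_zero]
        exact Submodule.subset_span ⟨y, rfl⟩) v
    have : T.mkQ (wedgeD A B n v) = 0 := hz
    rwa [Submodule.mkQ_apply, Submodule.Quotient.mk_eq_zero] at this
  rw [← top_le_iff, ← wedge_span A B n]
  rw [Submodule.span_le]
  rintro _ ⟨v, rfl⟩
  exact hvanish v

lemma cons_tprod (n : ℕ) (b : B) (c : Fin n → B) :
    sgl A B (n+1) 0 b * ∏ j : Fin n, sgl A B (n+1) j.succ (c j)
      = tprod A (Fin.cons b c : Fin (n+1) → B) := by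
  rw [← prod_single A B (n+1) (Fin.cons b c), Fin.prod_univ_succ]
  simp

lemma dElt_eq (n : ℕ) (j : Fin n) (hi : (0:ℕ) ≤ n) (hj : j.val + 1 ≤ n) (z : B) :
    dElt A B n 0 (j.val+1) hi hj z = sgl A B (n+1) j.succ z - sgl A B (n+1) 0 z := by
  rw [dElt]
  have h1 : (⟨j.val + 1, by omega⟩ : Fin (n+1)) = Fin.succ j := Fin.ext rfl
  have h0 : (⟨0, by omega⟩ : Fin (n+1)) = 0 := Fin.ext (by simp)
  rw [h1, h0]

lemma expand (n : ℕ) (b : B) (y : Fin n → B) :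
    sgl A B (n+1) 0 b *
        ∏ j : Fin n, dElt A B n 0 (j.val+1) (Nat.zero_le n) j.isLt (y j)
      = ∑ S ∈ Finset.univ.powerset, ((-1:ℤ)^((Finset.univ \ S).card)) •
          tprod A (Fin.cons (b * ∏ j ∈ Finset.univ \ S, y j)
            (fun j => if j ∈ S then y j else 1) : Fin (n+1) → B) := by
  have hd : ∀ j ∈ Finset.univ, dElt A B n 0 (j.val+1)
      (Nat.zero_le n) j.isLt (y j)
      = sgl A B (n+1) (Fin.succ j) (y j) + (- sgl A B (n+1) 0 (y j)) := by
    intro j _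
    rw [dElt_eq, sub_eq_add_neg]
  rw [Finset.prod_congr rfl hd, Finset.prod_add, Finset.mul_sum]
  refine Finset.sum_congr rfl fun S hS => ?_
  have hneg : ∏ j ∈ Finset.univ \ S, (- sgl A B (n+1) 0 (y j))
      = ((-1 : Bpow A B (n+1))^((Finset.univ \ S).card)) *
        sgl A B (n+1) 0 (∏ j ∈ Finset.univ \ S, y j) := by
    rw [map_prod, ← Finset.prod_const, ← Finset.prod_mul_distrib]
    exact Finset.prod_congr rfl fun x _ => by rw [neg_one_mul]
  have hprodS : ∏ j ∈ S, sgl A B (n+1) (Fin.succ j) (y j)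
      = ∏ j : Fin n, sgl A B (n+1) (Fin.succ j) (if j ∈ S then y j else 1) := by
    rw [Finset.prod_congr rfl (fun x hx => by rw [if_pos hx] :
      ∀ x ∈ S, sgl A B (n+1) (Fin.succ x) (y x)
        = sgl A B (n+1) (Fin.succ x) (if x ∈ S then y x else 1))]
    refine Finset.prod_subset (Finset.subset_univ S) (fun x _ hx => ?_)
    rw [if_neg hx, _root_.map_one]
  rw [hneg, hprodS]
  have hcast : ((-1 : Bpow A B (n+1))^((Finset.univ \ S).card))
      = (((-1:ℤ)^((Finset.univ \ S).card) : ℤ) : Bpow A B (n+1)) := by push_cast; ring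
  rw [hcast]
  rw [show ∀ (z : ℤ) (t : Bpow A B (n+1)), (z : Bpow A B (n+1)) * t = z • t from
    fun z t => (zsmul_eq_mul t z).symm |>.trans rfl]
  rw [← cons_tprod, mul_smul_comm, mul_smul_comm, _root_.map_mul]
  congr 1
  ring

lemma wedgeD_coord_zero (n : ℕ) (v : Fin n → Ω[B⁄A]) (j : Fin n) (h : v j = 0) :
    wedgeD A B n v = 0 := by
  apply Subtype.ext
  show ExteriorAlgebra.ιMulti B n v = 0
  exact MultilinearMap.map_coord_zero _ j h

lemma PsiPhi_gen (n : ℕ) (Ψ : Cq A B n →ₗ[A] ⋀[B]^n (Ω[B⁄A]))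
    (hΨ : ∀ y : Fin (n+1) → B,
      Ψ (Ideal.Quotient.mk (Kideal A B n) (PiTensorProduct.tprod A y))
        = y 0 • wedgeD A B n (fun i => KaehlerDifferential.D A B (y i.succ)))
    (b : B) (y : Fin n → B) :
    Ψ (b • ∏ i : Fin n, Ideal.Quotient.mk (Kideal A B n)
        (dElt A B n 0 (i.val+1) (Nat.zero_le n) i.isLt (y i)))
      = b • wedgeD A B n (fun i => KaehlerDifferential.D A B (y i)) := by
  rw [Algebra.smul_def, algebraMap_BCq, ← map_prod, ← _root_.map_mul, expand, map_sum, map_sum]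
  rw [Finset.sum_eq_single Finset.univ]
  · rw [map_zsmul, map_zsmul, hΨ]
    simp only [Fin.cons_zero, Fin.cons_succ, Finset.sdiff_self, Finset.card_empty, pow_zero,
      Finset.prod_empty, mul_one, one_smul, Finset.mem_univ, if_true]
  · intro S hS hSne
    obtain ⟨j, hj⟩ : ∃ j : Fin n, j ∉ S := by
      by_contra hc
      push_neg at hc
      exact hSne (Finset.eq_univ_iff_forall.mpr hc)
    rw [map_zsmul, map_zsmul, hΨ]
    have hzero : wedgeD A B n
        (fun i => KaehlerDifferential.D A B
          ((Fin.cons (b * ∏ j ∈ Finset.univ \ S, y j)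
            (fun j => if j ∈ S then y j else 1) : Fin (n+1) → B) i.succ)) = 0 := by
      refine wedgeD_coord_zero A B n _ j ?_
      simp only [Fin.cons_succ, if_neg hj]
      exact Derivation.map_one_eq_zero _
    rw [hzero, smul_zero, smul_zero]
  · intro h
    exact absurd (Finset.mem_powerset.mpr (Finset.subset_univ _)) h

/-- (2 invertible in `A`.)  The map `Φₙ : Λⁿ Ω¹_{B/A} → Cₙ` with
`Φₙ(dy₁ ∧ ⋯ ∧ dyₙ) = ∏ⱼ [d^{0,j} yⱼ]` is well defined (i.e. exists, `B`-linearly, and is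
unique), and `Ψₙ ∘ Φₙ = id` on `Λⁿ Ω¹_{B/A}`. -/
theorem statement11 (n : ℕ) (h2 : IsUnit (2 : A))
    (Ψ : Cq A B (n) →ₗ[A] ⋀[B]^(n) (Ω[B⁄A]))
    (hΨ : ∀ y : Fin (n+1) → B,
      Ψ (Ideal.Quotient.mk (Kideal A B (n)) (PiTensorProduct.tprod A y))
        = y 0 • wedgeD A B (n) (fun i => KaehlerDifferential.D A B (y i.succ))) :
    (∃! Φ : (⋀[B]^n (Ω[B⁄A])) →ₗ[B] Cq A B n,
      ∀ y : Fin n → B,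
        Φ (wedgeD A B n (fun i => KaehlerDifferential.D A B (y i)))
          = ∏ i : Fin n, Ideal.Quotient.mk (Kideal A B n)
              (dElt A B n 0 (i.val+1) (by omega) (by have := i.isLt; omega) (y i))) ∧
    (∀ Φ : (⋀[B]^n (Ω[B⁄A])) →ₗ[B] Cq A B n,
      (∀ y : Fin n → B,
        Φ (wedgeD A B n (fun i => KaehlerDifferential.D A B (y i)))
          = ∏ i : Fin n, Ideal.Quotient.mk (Kideal A B n)
              (dElt A B n 0 (i.val+1) (by omega) (by have := i.isLt; omega) (y i))) →
      ∀ ω : ⋀[B]^n (Ω[B⁄A]), Ψ (Φ ω) = ω) := by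
  have hPhi : ∀ y : Fin n → B,
      Phi A B n h2 (wedgeD A B n (fun i => KaehlerDifferential.D A B (y i)))
        = ∏ i : Fin n, Ideal.Quotient.mk (Kideal A B n)
            (dElt A B n 0 (i.val+1) (by omega) (by have := i.isLt; omega) (y i)) := by
    intro y
    rw [Phi_wedgeD]
    exact Finset.prod_congr rfl fun j _ => phi_D A B n j (y j)
  constructor
  · refine ⟨Phi A B n h2, hPhi, ?_⟩
    intro Φ' h'
    apply LinearMap.ext
    intro ω
    have hx : ω ∈ Submodule.span B
        {w : ⋀[B]^n (Ω[B⁄A]) | ∃ y : Fin n → B,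
          w = wedgeD A B n (fun i => KaehlerDifferential.D A B (y i))} := by
      rw [gen_span]; trivial
    induction hx using Submodule.span_induction with
    | mem x hx =>
      obtain ⟨y, rfl⟩ := hx
      rw [h' y, hPhi y]
    | zero => simp
    | add x y _ _ hA hB => rw [map_add, map_add, hA, hB]
    | smul b x _ hA => rw [map_smul, map_smul, hA]
  · intro Φ hΦ ω
    have key : ∀ (b : B) (y : Fin n → B),
        Ψ (Φ (b • wedgeD A B n fun i => KaehlerDifferential.D A B (y i)))
          = b • wedgeD A B n fun i => KaehlerDifferential.D A B (y i) := by
      intro b y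
      rw [map_smul, hΦ]
      exact PsiPhi_gen A B n Ψ hΨ b y
    set S : Set (⋀[B]^n (Ω[B⁄A])) := {x | ∃ (b : B) (y : Fin n → B),
      x = b • wedgeD A B n fun i => KaehlerDifferential.D A B (y i)} with hSdef
    have hsmul : ∀ (b : B) (x : ⋀[B]^n (Ω[B⁄A])), x ∈ Submodule.span A S →
        b • x ∈ Submodule.span A S := by
      intro b x hx
      induction hx using Submodule.span_induction with
      | mem x hx =>
        obtain ⟨b', y, rfl⟩ := hx
        rw [smul_smul]
        exact Submodule.subset_span ⟨b*b', y, rfl⟩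
      | zero => rw [smul_zero]; exact Submodule.zero_mem _
      | add x y _ _ hA hB => rw [smul_add]; exact Submodule.add_mem _ hA hB
      | smul a x _ hA =>
        rw [← algebraMap_smul B a x, smul_smul, mul_comm, ← smul_smul, algebraMap_smul]
        exact Submodule.smul_mem _ a hA
    have hT0 : ∀ x : ⋀[B]^n (Ω[B⁄A]), x ∈ Submodule.span A S := by
      let T' : Submodule B (⋀[B]^n (Ω[B⁄A])) :=
        { carrier := Submodule.span A S
          add_mem' := fun hA hB => Submodule.add_mem _ hA hB
          zero_mem' := Submodule.zero_mem _
          smul_mem' := fun b x hx => hsmul b x hx }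
      have hle : (⊤ : Submodule B (⋀[B]^n (Ω[B⁄A]))) ≤ T' := by
        rw [← gen_span A B n]
        refine Submodule.span_le.mpr ?_
        rintro x ⟨y, rfl⟩
        exact Submodule.subset_span ⟨1, y, (one_smul _ _).symm⟩
      exact fun x => hle Submodule.mem_top
    have hx := hT0 ω
    induction hx using Submodule.span_induction with
    | mem x hx =>
      obtain ⟨b, y, rfl⟩ := hx
      exact key b y
    | zero => simp
    | add x y _ _ hA hB => rw [map_add, map_add, hA, hB]
    | smul a x _ hA => rw [LinearMap.map_smul_of_tower, map_smul, hA]
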